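/- Let ‖·‖ be a symmetric norm on ℝⁿ, φ : ℝ → ℝ a monotone Lipschitz function, and f = (f₁,…,f_n) ∈ ℝⁿ. Then ‖φ(f) − (n^{−1}Σ_i φ(f_i)) 𝟙‖ ≤ Lip(φ)·‖f − (n^{−1}Σ_i f_i) 𝟙‖, where φ is applied coordinatewise. -/

import Mathlib

open Finset

section aux
variable {n : ℕ} (N : (Fin n → ℝ) → ℝ)

/-- centering operator -/
noncomputable def Cc (a : Fin n → ℝ) : Fin n → ℝ := fun i => a i - (n : ℝ)⁻¹ * ∑ j, a j

theorem ttrans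
    (hN_add : ∀ a b, N (a + b) ≤ N a + N b)
    (hN_smul : ∀ (c : ℝ) a, N (c • a) = |c| * N a)
    (hN_perm : ∀ (σ : Equiv.Perm (Fin n)) a, N (a ∘ σ) = N a)
    (a : Fin n → ℝ) (i j : Fin n) (hij : i ≠ j) (s : ℝ) (hs : 0 ≤ s)
    (hsd : s ≤ a j - a i) :
    N (fun k => a k + (if k = i then s else if k = j then -s else 0)) ≤ N a := by
  rcases eq_or_lt_of_le (hs.trans hsd) with hd | hd
  · have hs0 : s = 0 := le_antisymm (by linarith) hs
    have : (fun k => a k + (if k = i then s else if k = j then -s else 0)) = a := by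
      funext k; rcases eq_or_ne k i with rfl | h1
      · simp [hs0]
      · rcases eq_or_ne k j with rfl | h2
        · simp [h1, hs0]
        · simp [h1, h2]
    rw [this]
  · set d := a j - a i with hdd
    set l := s / d with hl
    have hl0 : 0 ≤ l := div_nonneg hs hd.le
    have hl1 : l ≤ 1 := by
      rw [hl, div_le_one hd]; exact hsd
    have hld : l * d = s := by rw [hl, div_mul_cancel₀ s hd.ne']
    set b : Fin n → ℝ := a ∘ (Equiv.swap i j) with hb
    have hveq : (fun k => a k + (if k = i then s else if k = j then -s else 0))
        = (1 - l) • a + l • b := by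
      funext k
      simp only [Pi.add_apply, Pi.smul_apply, smul_eq_mul, hb, Function.comp]
      rcases eq_or_ne k i with rfl | h1
      · rw [if_pos rfl, Equiv.swap_apply_left]; nlinarith [hld]
      · rcases eq_or_ne k j with rfl | h2
        · rw [if_neg h1, if_pos rfl, Equiv.swap_apply_right]; nlinarith [hld]
        · rw [if_neg h1, if_neg h2, Equiv.swap_apply_of_ne_of_ne h1 h2]; ring
    rw [hveq]
    calc N ((1 - l) • a + l • b) ≤ N ((1 - l) • a) + N (l • b) := hN_add _ _
      _ = |1 - l| * N a + |l| * N b := by rw [hN_smul, hN_smul]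
      _ = (1 - l) * N a + l * N a := by
          rw [abs_of_nonneg (by linarith), abs_of_nonneg hl0, hN_perm (Equiv.swap i j) a]
      _ = N a := by ring


theorem trans_chain
    (hN_add : ∀ a b, N (a + b) ≤ N a + N b)
    (hN_smul : ∀ (c : ℝ) a, N (c • a) = |c| * N a)
    (hN_perm : ∀ (σ : Equiv.Perm (Fin n)) a, N (a ∘ σ) = N a)
    (s : ℝ) (hs : 0 ≤ s) (S : Finset (Fin n × Fin n)) :
    ∀ (a : Fin n → ℝ),
      (∀ p ∈ S, ∀ q ∈ S, p.1 ≠ q.2) →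
      (∀ p ∈ S, s * (((S.filter (fun q => q.1 = p.1)).card : ℝ)
          + ((S.filter (fun q => q.2 = p.2)).card : ℝ)) ≤ a p.2 - a p.1) →
      N (fun k => a k + s * (((S.filter (fun q => q.1 = k)).card : ℝ)
          - ((S.filter (fun q => q.2 = k)).card : ℝ))) ≤ N a := by
  induction S using Finset.induction_on with
  | empty => intro a _ _; simp
  | @insert p S hp IH =>
    intro a hrole hbound
    have hcard : ∀ (v : Fin n) (g : Fin n × Fin n → Fin n),
        ((((insert p S).filter (fun q => g q = v)).card : ℝ))
          = ((S.filter (fun q => g q = v)).card : ℝ) + (if g p = v then 1 else 0) := by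
      intro v g
      rw [Finset.filter_insert]
      split
      · rw [Finset.card_insert_of_notMem (fun h => hp (Finset.mem_filter.mp h).1)]
        push_cast
        simp [*]
      · simp [*]
    have hpI : p ∈ insert p S := Finset.mem_insert_self p S
    have hp12 : p.1 ≠ p.2 := hrole p hpI p hpI
    set a' : Fin n → ℝ := fun k => a k + (if k = p.1 then s else if k = p.2 then -s else 0)
      with ha'
    -- step 1 : N a' ≤ N a
    have hcpos1 : (1:ℝ) ≤ (((insert p S).filter (fun q => q.1 = p.1)).card : ℝ) := by
      have : p ∈ (insert p S).filter (fun q => q.1 = p.1) := by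
        simp [Finset.mem_filter, hpI]
      exact_mod_cast Finset.one_le_card.mpr ⟨p, this⟩
    have hcpos2 : (0:ℝ) ≤ (((insert p S).filter (fun q => q.2 = p.2)).card : ℝ) := by
      positivity
    have hstep1 : N a' ≤ N a := by
      apply ttrans N hN_add hN_smul hN_perm a p.1 p.2 hp12 s hs
      have hb := hbound p hpI
      nlinarith
    -- step 2 : IH for a'
    have hrole' : ∀ q ∈ S, ∀ r ∈ S, q.1 ≠ r.2 := fun q hq r hr =>
      hrole q (Finset.mem_insert_of_mem hq) r (Finset.mem_insert_of_mem hr)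
    have ha'val : ∀ q ∈ S, a' q.1 = a q.1 + (if q.1 = p.1 then s else 0)
        ∧ a' q.2 = a q.2 + (if q.2 = p.2 then -s else 0) := by
      intro q hq
      have h1 : q.1 ≠ p.2 := hrole q (Finset.mem_insert_of_mem hq) p hpI
      have h2 : q.2 ≠ p.1 := (hrole p hpI q (Finset.mem_insert_of_mem hq)).symm
      constructor
      · show a q.1 + (if q.1 = p.1 then s else if q.1 = p.2 then -s else 0) = _
        by_cases h : q.1 = p.1
        · rw [if_pos h, if_pos h]
        · rw [if_neg h, if_neg h1, if_neg h]
      · show a q.2 + (if q.2 = p.1 then s else if q.2 = p.2 then -s else 0) = _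
        rw [if_neg h2]
    have hbound' : ∀ q ∈ S, s * (((S.filter (fun r => r.1 = q.1)).card : ℝ)
        + ((S.filter (fun r => r.2 = q.2)).card : ℝ)) ≤ a' q.2 - a' q.1 := by
      intro q hq
      obtain ⟨e1, e2⟩ := ha'val q hq
      have hb := hbound q (Finset.mem_insert_of_mem hq)
      rw [hcard q.1 Prod.fst, hcard q.2 Prod.snd] at hb
      rw [e1, e2]
      by_cases h1 : q.1 = p.1 <;> by_cases h2 : q.2 = p.2
      · rw [if_pos h1, if_pos h2]
        rw [if_pos h1.symm, if_pos h2.symm] at hb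
        linarith
      · rw [if_pos h1, if_neg h2]
        rw [if_pos h1.symm, if_neg (fun h => h2 h.symm)] at hb
        linarith
      · rw [if_neg h1, if_pos h2]
        rw [if_neg (fun h => h1 h.symm), if_pos h2.symm] at hb
        linarith
      · rw [if_neg h1, if_neg h2]
        rw [if_neg (fun h => h1 h.symm), if_neg (fun h => h2 h.symm)] at hb
        linarith
    have hIH := IH a' hrole' hbound'
    -- step 3 : vector equality
    have hveq : (fun k => a k + s * ((((insert p S).filter (fun q => q.1 = k)).card : ℝ)
          - (((insert p S).filter (fun q => q.2 = k)).card : ℝ)))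
        = (fun k => a' k + s * (((S.filter (fun q => q.1 = k)).card : ℝ)
          - ((S.filter (fun q => q.2 = k)).card : ℝ))) := by
      funext k
      rw [hcard k Prod.fst, hcard k Prod.snd]
      show a k + s * (_ - _)
          = (a k + (if k = p.1 then s else if k = p.2 then -s else 0)) + s * (_ - _)
      by_cases h1 : k = p.1
      · rw [if_pos h1.symm, if_neg (fun h : p.2 = k => hp12 ((h.trans h1).symm)),
          if_pos h1]
        ring
      · rw [if_neg (fun h => h1 h.symm), if_neg h1]
        by_cases h2 : k = p.2
        · rw [if_pos h2.symm, if_pos h2]; ring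
        · rw [if_neg (fun h => h2 h.symm), if_neg h2]; ring
    rw [hveq]
    exact hIH.trans hstep1

theorem lemA
    (hN_add : ∀ a b, N (a + b) ≤ N a + N b)
    (hN_smul : ∀ (c : ℝ) a, N (c • a) = |c| * N a)
    (hN_perm : ∀ (σ : Equiv.Perm (Fin n)) a, N (a ∘ σ) = N a)
    (hn : 0 < n) (z : Fin n → ℝ) (m : ℕ) (t : ℝ) (ht : 0 ≤ t)
    (hz : ∀ i j : Fin n, i.val ≤ m → m < j.val → t ≤ z j - z i) :
    N (Cc (fun i => z i - if m < i.val then t else 0)) ≤ N (Cc z) := by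
  have hn0 : (n : ℝ) ≠ 0 := Nat.cast_ne_zero.mpr hn.ne'
  set A : Finset (Fin n) := univ.filter (fun i => i.val ≤ m) with hA
  set B : Finset (Fin n) := univ.filter (fun i => m < i.val) with hB
  set S : Finset (Fin n × Fin n) := A ×ˢ B with hS
  have hmemA : ∀ i : Fin n, i ∈ A ↔ i.val ≤ m := by intro i; simp [hA]
  have hmemB : ∀ i : Fin n, i ∈ B ↔ m < i.val := by intro i; simp [hB]
  have hcardsum : A.card + B.card = n := by
    have : B = univ.filter (fun i : Fin n => ¬ i.val ≤ m) := by
      rw [hB]; congr 1; funext i; simp only [Nat.not_le]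
    rw [hA, this, Finset.card_filter_add_card_filter_not]
    simp
  have hc1 : ∀ k : Fin n,
      ((S.filter (fun q => q.1 = k)).card : ℝ) = if k ∈ A then (B.card : ℝ) else 0 := by
    intro k
    have : S.filter (fun q => q.1 = k) = if k ∈ A then ({k} ×ˢ B) else ∅ := by
      split <;> (rename_i hk; ext q; simp only [hS, Finset.mem_filter,
        Finset.mem_product, Finset.mem_singleton, Finset.notMem_empty])
      · constructor
        · rintro ⟨⟨_, hqB⟩, hq1⟩; exact ⟨hq1, hqB⟩
        · rintro ⟨hq1, hqB⟩; exact ⟨⟨hq1 ▸ hk, hqB⟩, hq1⟩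
      · simp only [iff_false]; rintro ⟨⟨hqA, _⟩, hq1⟩; exact hk (hq1 ▸ hqA)
    rw [this]; split <;> simp [Finset.card_product]
  have hc2 : ∀ k : Fin n,
      ((S.filter (fun q => q.2 = k)).card : ℝ) = if k ∈ B then (A.card : ℝ) else 0 := by
    intro k
    have : S.filter (fun q => q.2 = k) = if k ∈ B then (A ×ˢ {k}) else ∅ := by
      split <;> (rename_i hk; ext q; simp only [hS, Finset.mem_filter,
        Finset.mem_product, Finset.mem_singleton, Finset.notMem_empty])
      · constructor
        · rintro ⟨⟨hqA, _⟩, hq2⟩; exact ⟨hqA, hq2⟩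
        · rintro ⟨hqA, hq2⟩; exact ⟨⟨hqA, hq2 ▸ hk⟩, hq2⟩
      · simp only [iff_false]; rintro ⟨⟨_, hqB⟩, hq2⟩; exact hk (hq2 ▸ hqB)
    rw [this]; split <;> simp [Finset.card_product]
  have hrole : ∀ p ∈ S, ∀ q ∈ S, p.1 ≠ q.2 := by
    intro p hp q hq
    rw [hS, Finset.mem_product] at hp hq
    have h1 := (hmemA p.1).mp hp.1
    have h2 := (hmemB q.2).mp hq.2
    intro h; rw [h] at h1; omega
  have hbound : ∀ p ∈ S, (t / n) * (((S.filter (fun q => q.1 = p.1)).card : ℝ)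
      + ((S.filter (fun q => q.2 = p.2)).card : ℝ)) ≤ Cc z p.2 - Cc z p.1 := by
    intro p hp
    rw [hS, Finset.mem_product] at hp
    rw [hc1, hc2, if_pos hp.1, if_pos hp.2]
    have hcz : Cc z p.2 - Cc z p.1 = z p.2 - z p.1 := by simp [Cc]
    rw [hcz]
    have : (t / n) * ((B.card : ℝ) + (A.card : ℝ)) = t := by
      rw [show ((B.card : ℝ) + A.card) = ((n : ℝ)) by push_cast [← hcardsum]; ring,
        div_mul_cancel₀ t hn0]
    rw [this]
    exact hz p.1 p.2 ((hmemA p.1).mp hp.1) ((hmemB p.2).mp hp.2)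
  have key := trans_chain N hN_add hN_smul hN_perm (t / n)
    (div_nonneg ht (Nat.cast_nonneg n)) S (Cc z) hrole hbound
  have hveq : (fun k => Cc z k + (t / n) * (((S.filter (fun q => q.1 = k)).card : ℝ)
      - ((S.filter (fun q => q.2 = k)).card : ℝ)))
      = Cc (fun i => z i - if m < i.val then t else 0) := by
    funext k
    have hsum : ∑ j, (z j - if m < (j : Fin n).val then t else 0)
        = (∑ j, z j) - (B.card : ℝ) * t := by
      rw [Finset.sum_sub_distrib]
      congr 1
      rw [← Finset.sum_filter, Finset.sum_const, nsmul_eq_mul]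
    rw [hc1, hc2]
    simp only [Cc, hsum]
    by_cases hk : k.val ≤ m
    · rw [if_pos ((hmemA k).mpr hk), if_neg (by rw [hmemB]; omega),
        if_neg (by omega : ¬ m < k.val)]
      field_simp
      ring
    · rw [if_neg (by rw [hmemA]; omega), if_pos ((hmemB k).mpr (by omega)),
        if_pos (by omega : m < k.val)]
      have hBA : (A.card : ℝ) = (n : ℝ) - B.card := by push_cast [← hcardsum]; ring
      rw [hBA]
      field_simp
      ring
  rw [hveq] at key
  exact key


theorem lemB
    (hN_add : ∀ a b, N (a + b) ≤ N a + N b)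
    (hN_smul : ∀ (c : ℝ) a, N (c • a) = |c| * N a)
    (hN_perm : ∀ (σ : Equiv.Perm (Fin n)) a, N (a ∘ σ) = N a)
    (hn : 0 < n) (x y : Fin n → ℝ) (K : ℝ) (hK : 0 ≤ K)
    (hx : Monotone x)
    (hgap : ∀ (a : ℕ) (h : a + 1 < n),
      0 ≤ y ⟨a+1, h⟩ - y ⟨a, Nat.lt_of_succ_lt h⟩ ∧
      y ⟨a+1, h⟩ - y ⟨a, Nat.lt_of_succ_lt h⟩
        ≤ K * (x ⟨a+1, h⟩ - x ⟨a, Nat.lt_of_succ_lt h⟩)) :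
    N (Cc y) ≤ K * N (Cc x) := by
  have hn0 : (n : ℝ) ≠ 0 := Nat.cast_ne_zero.mpr hn.ne'
  set X : ℕ → ℝ := fun a => x ⟨min a (n-1), by omega⟩ with hXdef
  set Y : ℕ → ℝ := fun a => y ⟨min a (n-1), by omega⟩ with hYdef
  have hXv : ∀ (a : ℕ) (h : a < n), X a = x ⟨a, h⟩ := by
    intro a h; show x _ = x _; congr 1; exact Fin.ext (by simp; omega)
  have hYv : ∀ (a : ℕ) (h : a < n), Y a = y ⟨a, h⟩ := by
    intro a h; show y _ = y _; congr 1; exact Fin.ext (by simp; omega)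
  have hXx : ∀ i : Fin n, X i.val = x i := fun i => (hXv i.val i.isLt).trans (by congr)
  have hYy : ∀ i : Fin n, Y i.val = y i := fun i => (hYv i.val i.isLt).trans (by congr)
  have hXmono : Monotone X := by
    intro a b hab; exact hx (Fin.mk_le_mk.mpr (by omega))
  have hYsucc : ∀ a : ℕ, Y a ≤ Y (a+1) := by
    intro a
    by_cases h : a + 1 < n
    · rw [hYv a (by omega), hYv (a+1) h]
      linarith [(hgap a h).1]
    · have : (⟨min a (n-1), by omega⟩ : Fin n) = ⟨min (a+1) (n-1), by omega⟩ :=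
        Fin.ext (by simp; omega)
      show y _ ≤ y _
      rw [this]
  have hYmono : Monotone Y := monotone_nat_of_le_succ hYsucc
  set δ : ℕ → ℝ := fun a => (Y (a+1) - Y a) - K * (X (a+1) - X a) with hδdef
  have hδsum : ∀ l r : ℕ, l ≤ r →
      ∑ j ∈ Finset.Ico l r, δ j = (Y r - Y l) - K * (X r - X l) := by
    intro l r hlr
    set g : ℕ → ℝ := fun a => Y a - K * X a with hgdef
    have hδg : ∀ j, δ j = g (j+1) - g j := by intro j; simp [hδdef, hgdef]; ring
    calc ∑ j ∈ Finset.Ico l r, δ j = ∑ j ∈ Finset.Ico l r, (g (j+1) - g j) := by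
          exact Finset.sum_congr rfl (fun j _ => hδg j)
      _ = (∑ j ∈ Finset.range r, (g (j+1) - g j))
          - ∑ j ∈ Finset.range l, (g (j+1) - g j) := Finset.sum_Ico_eq_sub _ hlr
      _ = (g r - g 0) - (g l - g 0) := by rw [Finset.sum_range_sub, Finset.sum_range_sub]
      _ = (Y r - Y l) - K * (X r - X l) := by simp [hgdef]; ring
  set w : ℕ → (Fin n → ℝ) := fun k i => K * X i.val + ∑ j ∈ Finset.range (min k i.val), δ j
    with hwdef
  have hdiff : ∀ (k : ℕ) (i j : Fin n), i ≤ j → w k j - w k i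
      = K * (X j.val - X i.val) + ((Y (min k j.val) - Y (min k i.val))
        - K * (X (min k j.val) - X (min k i.val))) := by
    intro k i j hij
    have hm : min k i.val ≤ min k j.val := by
      have : i.val ≤ j.val := hij
      omega
    have : ∑ j' ∈ Finset.range (min k j.val), δ j' - ∑ j' ∈ Finset.range (min k i.val), δ j'
        = ∑ j' ∈ Finset.Ico (min k i.val) (min k j.val), δ j' := by
      rw [Finset.sum_Ico_eq_sub _ hm]
    rw [hwdef]
    simp only
    rw [show K * X j.val + ∑ j' ∈ Finset.range (min k j.val), δ j'
        - (K * X i.val + ∑ j' ∈ Finset.range (min k i.val), δ j')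
        = K * (X j.val - X i.val)
          + (∑ j' ∈ Finset.range (min k j.val), δ j'
            - ∑ j' ∈ Finset.range (min k i.val), δ j') from by ring, this,
      hδsum _ _ hm]
  have hwmono : ∀ k, Monotone (w k) := by
    intro k i j hij
    have hd := hdiff k i j hij
    have hvij : i.val ≤ j.val := hij
    have hY' := hYmono (show min k i.val ≤ min k j.val by omega)
    have h1 : K * X (min k j.val) ≤ K * X j.val :=
      mul_le_mul_of_nonneg_left (hXmono (by omega)) hK
    by_cases hik : i.val ≤ k
    · have e1 : min k i.val = i.val := by omega
      rw [e1] at hd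
      have hY2 : Y i.val ≤ Y (min k j.val) := hYmono (by omega)
      linarith
    · have e1 : min k i.val = k := by omega
      have e2 : min k j.val = k := by omega
      rw [e1, e2] at hd
      have : K * X i.val ≤ K * X j.val := mul_le_mul_of_nonneg_left (hXmono hvij) hK
      linarith
  -- the inductive bound
  have key : ∀ k : ℕ, N (Cc (w k)) ≤ K * N (Cc x) := by
    intro k
    induction k with
    | zero =>
      have hw0 : w 0 = K • x := by
        funext i
        show K * X i.val + _ = _
        simp [hXx i]
      have hCc : Cc (K • x) = K • Cc x := by
        funext i
        simp only [Cc, Pi.smul_apply, smul_eq_mul]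
        rw [← Finset.mul_sum]
        ring
      rw [hw0, hCc, hN_smul, abs_of_nonneg hK]
    | succ k IH =>
      by_cases h : k + 1 < n
      · set t : ℝ := -(δ k) with htdef
        have hδk : δ k ≤ 0 := by
          have := (hgap k h).2
          rw [hδdef]
          simp only
          rw [hYv (k+1) h, hYv k (by omega), hXv (k+1) h, hXv k (by omega)]
          linarith
        have ht : 0 ≤ t := by rw [htdef]; linarith
        have hwrite : w (k+1) = fun i => w k i - if k < i.val then t else 0 := by
          funext i
          by_cases hik : i.val ≤ k
          · have : min (k+1) i.val = min k i.val := by omega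
            show K * X i.val + ∑ j ∈ Finset.range (min (k+1) i.val), δ j = _
            rw [this, if_neg (by omega)]
            show _ = K * X i.val + ∑ j ∈ Finset.range (min k i.val), δ j - 0
            ring
          · have e1 : min (k+1) i.val = k + 1 := by omega
            have e2 : min k i.val = k := by omega
            show K * X i.val + ∑ j ∈ Finset.range (min (k+1) i.val), δ j = _
            rw [e1, Finset.sum_range_succ, if_pos (by omega)]
            show _ = K * X i.val + ∑ j ∈ Finset.range (min k i.val), δ j - t
            rw [e2, htdef]
            ring
        have hz : ∀ i j : Fin n, i.val ≤ k → k < j.val → t ≤ w k j - w k i := by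
          intro i j hi hj
          have hij : i ≤ j := Fin.le_def.mpr (by omega)
          have hd := hdiff k i j hij
          have e1 : min k i.val = i.val := by omega
          have e2 : min k j.val = k := by omega
          rw [e1, e2] at hd
          have h1 : K * X (k+1) ≤ K * X j.val :=
            mul_le_mul_of_nonneg_left (hXmono (by omega)) hK
          have h2 : Y i.val ≤ Y k := hYmono (by omega)
          have h3 : Y k ≤ Y (k+1) := hYsucc k
          have h4 : K * X i.val ≤ K * X k := mul_le_mul_of_nonneg_left (hXmono (by omega)) hK
          rw [htdef, hδdef]
          simp only
          linarith
        rw [hwrite]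
        exact (lemA N hN_add hN_smul hN_perm hn (w k) k t ht hz).trans IH
      · have : w (k+1) = w k := by
          funext i
          have : min (k+1) i.val = min k i.val := by
            have := i.isLt; omega
          show K * X i.val + ∑ j ∈ Finset.range (min (k+1) i.val), δ j = _
          rw [this]
        rw [this]
        exact IH
  have hwn : Cc (w n) = Cc y := by
    have hw : w n = fun i => y i + (K * X 0 - Y 0) := by
      funext i
      have e : min n i.val = i.val := by have := i.isLt; omega
      show K * X i.val + ∑ j ∈ Finset.range (min n i.val), δ j = _
      rw [e, ← Nat.Ico_zero_eq_range, hδsum 0 i.val (Nat.zero_le _), hXx i, hYy i]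
      ring
    rw [hw]
    funext i
    simp only [Cc, Finset.sum_add_distrib, Finset.sum_const, Finset.card_univ,
      Fintype.card_fin, nsmul_eq_mul]
    field_simp
    ring
  calc N (Cc y) = N (Cc (w n)) := by rw [hwn]
    _ ≤ K * N (Cc x) := key n


theorem mainMono (φ : ℝ → ℝ) (K : NNReal)
    (hφ_mono : Monotone φ) (hφ_lip : LipschitzWith K φ)
    (hN_add : ∀ a b, N (a + b) ≤ N a + N b)
    (hN_smul : ∀ (c : ℝ) a, N (c • a) = |c| * N a)
    (hN_perm : ∀ (σ : Equiv.Perm (Fin n)) a, N (a ∘ σ) = N a)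
    (hn : 0 < n) (f : Fin n → ℝ) :
    N (Cc (fun i => φ (f i))) ≤ K * N (Cc f) := by
  set σ := Tuple.sort f with hσ
  have hsort : Monotone (f ∘ σ) := Tuple.monotone_sort f
  set x : Fin n → ℝ := f ∘ σ with hxdef
  set y : Fin n → ℝ := fun i => φ (x i) with hydef
  have hgap : ∀ (a : ℕ) (h : a + 1 < n),
      0 ≤ y ⟨a+1, h⟩ - y ⟨a, Nat.lt_of_succ_lt h⟩ ∧
      y ⟨a+1, h⟩ - y ⟨a, Nat.lt_of_succ_lt h⟩
        ≤ (K : ℝ) * (x ⟨a+1, h⟩ - x ⟨a, Nat.lt_of_succ_lt h⟩) := by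
    intro a h
    set i : Fin n := ⟨a, Nat.lt_of_succ_lt h⟩
    set j : Fin n := ⟨a+1, h⟩
    have hxle : x i ≤ x j := hsort (show i ≤ j from Fin.mk_le_mk.mpr (Nat.le_succ a))
    have hyle : φ (x i) ≤ φ (x j) := hφ_mono hxle
    have hd := hφ_lip.dist_le_mul (x j) (x i)
    rw [Real.dist_eq, Real.dist_eq, abs_of_nonneg (sub_nonneg.mpr hyle),
      abs_of_nonneg (sub_nonneg.mpr hxle)] at hd
    exact ⟨sub_nonneg.mpr hyle, hd⟩
  have hlem := lemB N hN_add hN_smul hN_perm hn x y (K : ℝ) K.coe_nonneg hsort hgap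
  have hxperm : Cc x = (Cc f) ∘ σ := by
    funext i
    simp only [Cc, hxdef, Function.comp]
    rw [Equiv.sum_comp σ f]
  have hyperm : Cc y = (Cc (fun i => φ (f i))) ∘ σ := by
    funext i
    simp only [Cc, hydef, hxdef, Function.comp]
    rw [Equiv.sum_comp σ (fun j => φ (f j))]
  rw [hxperm, hyperm, hN_perm, hN_perm] at hlem
  exact hlem
end aux

/-- Corollary 2: for a monotone Lipschitz function `φ` and any symmetric norm
`N` on `ℝⁿ`, `‖φ(f) − (Eφ(f))𝟙‖ ≤ Lip(φ)·‖f − (Ef)𝟙‖`. -/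
theorem chain_rule_symmetric_norm {n : ℕ} (φ : ℝ → ℝ) (K : NNReal)
    (hφ_mono : Monotone φ ∨ Antitone φ) (hφ_lip : LipschitzWith K φ)
    (N : (Fin n → ℝ) → ℝ)
    (hN_add : ∀ a b, N (a + b) ≤ N a + N b)
    (hN_smul : ∀ (c : ℝ) a, N (c • a) = |c| * N a)
    (hN_def : ∀ a, N a = 0 → a = 0)
    (hN_perm : ∀ (σ : Equiv.Perm (Fin n)) a, N (a ∘ σ) = N a)
    (hN_sign : ∀ (ε a : Fin n → ℝ), (∀ i, ε i = 1 ∨ ε i = -1) →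
      N (fun i => ε i * a i) = N a)
    (f : Fin n → ℝ) :
    N (fun i => φ (f i) - (n : ℝ)⁻¹ * ∑ j, φ (f j)) ≤
      K * N (fun i => f i - (n : ℝ)⁻¹ * ∑ j, f j) := by
  rcases Nat.eq_zero_or_pos n with hn | hn
  · subst hn
    have hN0 : N 0 = 0 := by
      have h := hN_smul 0 0
      simpa using h
    have e1 : (fun i : Fin 0 => φ (f i) - ((0:ℕ) : ℝ)⁻¹ * ∑ j, φ (f j)) = 0 :=
      funext fun i => i.elim0
    have e2 : (fun i : Fin 0 => f i - ((0:ℕ) : ℝ)⁻¹ * ∑ j, f j) = 0 :=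
      funext fun i => i.elim0
    rw [e1, e2, hN0]
    simp
  · rcases hφ_mono with hm | ha
    · exact mainMono N φ K hm hφ_lip hN_add hN_smul hN_perm hn f
    · set ψ : ℝ → ℝ := fun r => -(φ r) with hψ
      have hψm : Monotone ψ := fun a b hab => neg_le_neg (ha hab)
      have hψlip : LipschitzWith K ψ := by
        intro a b
        have := hφ_lip a b
        simpa [hψ, edist_dist, Real.dist_eq, abs_sub_comm, neg_sub] using this
      have hmain := mainMono N ψ K hψm hψlip hN_add hN_smul hN_perm hn f
      have hCCeq : Cc (fun i => φ (f i))
          = fun i => (-1 : ℝ) * (Cc (fun i => ψ (f i)) i) := by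
        funext i
        simp only [Cc, hψ]
        rw [Finset.sum_neg_distrib]
        ring
      have hsgn := hN_sign (fun _ => (-1 : ℝ)) (Cc (fun i => ψ (f i)))
        (fun _ => Or.inr rfl)
      calc N (fun i => φ (f i) - (n : ℝ)⁻¹ * ∑ j, φ (f j))
          = N (Cc (fun i => φ (f i))) := rfl
        _ = N (fun i => (-1 : ℝ) * (Cc (fun i => ψ (f i)) i)) := by rw [hCCeq]
        _ = N (Cc (fun i => ψ (f i))) := hsgn
        _ ≤ K * N (Cc f) := hmain
        _ = K * N (fun i => f i - (n : ℝ)⁻¹ * ∑ j, f j) := rfl
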